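/- arXiv:2009.12529 — 4 statements merged into one kernel-verified Lean document; each statement's English description precedes it below -/
import Mathlib

section
/- Let M be a positive integer, h > 0, and let u and w be periodic grid functions. Then (ψ(u,w), w) = 0, i.e. h·∑_{i=1}^{M} (1/3)·(u_i·Δ_x w_i + Δ_x(u·w)_i)·w_i = 0. (Lemma 2, first identity.) -/
open Finset

namespace BBMB

/-- A periodic grid function with period `M`. -/
def Periodic (M : ℕ) (u : ℤ → ℝ) : Prop := ∀ i : ℤ, u (i + (M : ℤ)) = u i

/-- Forward difference `δ_x u_{i+1/2} = (u_{i+1} - u_i)/h`. -/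
noncomputable def dxp (h : ℝ) (u : ℤ → ℝ) (i : ℤ) : ℝ := (u (i + 1) - u i) / h

/-- Backward difference `δ_x u_{i-1/2} = (u_i - u_{i-1})/h`. -/
noncomputable def dxm (h : ℝ) (u : ℤ → ℝ) (i : ℤ) : ℝ := (u i - u (i - 1)) / h

/-- Second difference `δ_x² u_i = (u_{i+1} - 2 u_i + u_{i-1})/h²`. -/
noncomputable def dxx (h : ℝ) (u : ℤ → ℝ) (i : ℤ) : ℝ :=
  (u (i + 1) - 2 * u i + u (i - 1)) / h ^ 2

/-- Centered difference `Δ_x u_i = (u_{i+1} - u_{i-1})/(2h)`. -/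
noncomputable def Dx (h : ℝ) (u : ℤ → ℝ) (i : ℤ) : ℝ := (u (i + 1) - u (i - 1)) / (2 * h)

/-- Discrete inner product `(u, w) = h ∑_{i=1}^{M} u_i w_i`. -/
noncomputable def ip (M : ℕ) (h : ℝ) (u w : ℤ → ℝ) : ℝ :=
  h * ∑ i ∈ Finset.Icc (1 : ℤ) (M : ℤ), u i * w i

/-- Discrete inner product `⟨δ_x u, δ_x w⟩ = h ∑_{i=1}^{M} (δ_x u_{i-1/2})(δ_x w_{i-1/2})`. -/
noncomputable def dip (M : ℕ) (h : ℝ) (u w : ℤ → ℝ) : ℝ :=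
  h * ∑ i ∈ Finset.Icc (1 : ℤ) (M : ℤ), dxm h u i * dxm h w i

/-- Discrete `L²` norm `‖u‖ = √((u,u))`. -/
noncomputable def nrm (M : ℕ) (h : ℝ) (u : ℤ → ℝ) : ℝ := Real.sqrt (ip M h u u)

/-- Discrete `H¹` seminorm `|u|₁ = √(⟨δ_x u, δ_x u⟩)`. -/
noncomputable def snorm (M : ℕ) (h : ℝ) (u : ℤ → ℝ) : ℝ := Real.sqrt (dip M h u u)

/-- Trilinear term `ψ(u,v)_i = (1/3) (u_i Δ_x v_i + Δ_x (u·v)_i)`. -/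
noncomputable def psi (h : ℝ) (u v : ℤ → ℝ) (i : ℤ) : ℝ :=
  (1 / 3) * (u i * Dx h v i + Dx h (fun j => u j * v j) i)

private lemma shift_sum (M : ℕ) (hM : 0 < M) (g : ℤ → ℝ)
    (hg : ∀ i : ℤ, g (i + (M : ℤ)) = g i) :
    ∑ i ∈ Finset.Icc (1 : ℤ) (M : ℤ), g (i + 1)
      = ∑ i ∈ Finset.Icc (1 : ℤ) (M : ℤ), g i := by
  have hM1 : (1 : ℤ) ≤ (M : ℤ) := by exact_mod_cast hM
  have h1 : ∑ i ∈ Finset.Icc (1 : ℤ) (M : ℤ), g (i + 1)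
      = ∑ i ∈ Finset.Icc (2 : ℤ) ((M : ℤ) + 1), g i := by
    rw [show (2 : ℤ) = 1 + 1 from rfl, ← map_add_right_Icc, Finset.sum_map]
    rfl
  have h2 : Finset.Icc (2 : ℤ) ((M : ℤ) + 1)
      = insert ((M : ℤ) + 1) (Finset.Icc 2 (M : ℤ)) := by
    ext x; simp only [Finset.mem_Icc, Finset.mem_insert]; omega
  have h3 : Finset.Icc (1 : ℤ) (M : ℤ) = insert (1 : ℤ) (Finset.Icc 2 (M : ℤ)) := by
    ext x; simp only [Finset.mem_Icc, Finset.mem_insert]; omega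
  rw [h1, h2, h3, Finset.sum_insert (by simp only [Finset.mem_Icc]; omega),
    Finset.sum_insert (by simp only [Finset.mem_Icc]; omega)]
  have : g ((M : ℤ) + 1) = g 1 := by rw [add_comm, hg]
  rw [this]

/-- Lemma 2, first identity: `(ψ(u,w), w) = 0`. -/
theorem psi_inner_self (M : ℕ) (h : ℝ) (u w : ℤ → ℝ)
    (hM : 0 < M) (hh : 0 < h) (hu : Periodic M u) (hw : Periodic M w) :
    ip M h (psi h u w) w = 0 := by
  set a : ℤ → ℝ := fun i => u i * w i * w (i + 1) with ha_def
  set b : ℤ → ℝ := fun i => u i * w i * w (i - 1) with hb_def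
  have ha : ∀ i : ℤ, a (i + (M : ℤ)) = a i := by
    intro i
    simp only [ha_def]
    rw [show i + (M : ℤ) + 1 = (i + 1) + (M : ℤ) by ring, hu, hw, hw]
  have hb : ∀ i : ℤ, b (i + (M : ℤ)) = b i := by
    intro i
    simp only [hb_def]
    rw [show i + (M : ℤ) - 1 = (i - 1) + (M : ℤ) by ring, hu, hw, hw]
  have ha' : ∀ i : ℤ, (fun j => a (j - 1)) (i + (M : ℤ)) = (fun j => a (j - 1)) i := by
    intro i; simp only
    rw [show i + (M : ℤ) - 1 = (i - 1) + (M : ℤ) by ring, ha]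
  have hA : ∑ i ∈ Finset.Icc (1 : ℤ) (M : ℤ), a (i - 1)
      = ∑ i ∈ Finset.Icc (1 : ℤ) (M : ℤ), a i := by
    have := shift_sum M hM (fun j => a (j - 1)) ha'
    simpa using this.symm
  have hB : ∑ i ∈ Finset.Icc (1 : ℤ) (M : ℤ), b (i + 1)
      = ∑ i ∈ Finset.Icc (1 : ℤ) (M : ℤ), b i := shift_sum M hM b hb
  have expand : ∀ i : ℤ, psi h u w i * w i
      = (1 / (6 * h)) * (a i - a (i - 1) + (b (i + 1) - b i)) := by
    intro i
    simp only [psi, Dx, ha_def, hb_def]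
    field_simp
    ring
  have hsum : ∑ i ∈ Finset.Icc (1 : ℤ) (M : ℤ), psi h u w i * w i = 0 := by
    rw [Finset.sum_congr rfl fun i _ => expand i, ← Finset.mul_sum]
    rw [Finset.sum_add_distrib, Finset.sum_sub_distrib, Finset.sum_sub_distrib, hA, hB]
    ring
  rw [ip, hsum, mul_zero]


end BBMB
end

section
/- Let f : ℝ → ℝ be five times continuously differentiable on [x − h, x + h] for some x ∈ ℝ and h > 0, and suppose |f^{(k)}(y)| ≤ K for all y ∈ [x − h, x + h] and 0 ≤ k ≤ 5. Then, with Δ_x F = (f(x+h) − f(x−h))/(2h) and Δ_x G = (f''(x+h) − f''(x−h))/(2h), one has |f'(x) − (Δ_x F − (h²/6)·Δ_x G)| ≤ K·h⁴. (Lemma 3, second expansion: three-point fourth-order compact approximation of the first derivative.) -/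
open Finset

namespace BBMB

open Nat

lemma iter_iter {f : ℝ → ℝ} {s : Set ℝ} (hs : UniqueDiffOn ℝ s) (m k : ℕ) :
    ∀ y ∈ s, iteratedDerivWithin k (iteratedDerivWithin m f s) s y
      = iteratedDerivWithin (m + k) f s y := by
  induction k with
  | zero => intro y hy; simp
  | succ k IH =>
    intro y hy
    rw [iteratedDerivWithin_succ,
      derivWithin_congr (fun z hz => IH z hz) (IH y hy),
      ← iteratedDerivWithin_succ, ← add_assoc]

lemma contDiffOn_iter {f : ℝ → ℝ} {s : Set ℝ} (hs : UniqueDiffOn ℝ s) {n m i : ℕ}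
    (hf : ContDiffOn ℝ n f s) (hmi : m + i ≤ n) :
    ContDiffOn ℝ m (iteratedDerivWithin i f s) s := by
  rw [iteratedDerivWithin_eq_equiv_comp]
  intro y hy
  exact ((ContinuousMultilinearMap.piFieldEquiv ℝ (Fin i) ℝ).symm.contDiff.comp_contDiffWithinAt
    ((hf y hy).iteratedFDerivWithin_right hs (by exact_mod_cast hmi) hy))

lemma odd_expand (g : ℝ → ℝ) (x h C : ℝ) (hh : 0 < h) (n : ℕ)
    (hg : ContDiffOn ℝ (n + 1) g (Set.Icc (x - h) (x + h)))
    (hC : ∀ y ∈ Set.Icc (x - h) (x + h),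
      |iteratedDerivWithin (n + 1) g (Set.Icc (x - h) (x + h)) y| ≤ C) :
    |g (x + h) - g (x - h) -
        ∑ k ∈ Finset.range (n + 1), ((k ! : ℝ)⁻¹ * h ^ k * (1 - (-1 : ℝ) ^ k)) *
          iteratedDerivWithin k g (Set.Icc (x - h) (x + h)) x|
      ≤ 2 * C * h ^ (n + 1) / n ! := by
  set s : Set ℝ := Set.Icc (x - h) (x + h) with hs
  have hxh : x - h ≤ x + h := by linarith
  have hus : UniqueDiffOn ℝ s := uniqueDiffOn_Icc (by linarith)
  have huI : UniqueDiffOn ℝ (Set.Icc (0 : ℝ) h) := uniqueDiffOn_Icc hh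
  set ph : ℝ → ℝ := fun t => g (x + t) - g (x - t) with hph
  have mapsA : ∀ t ∈ Set.Icc (0 : ℝ) h, x + t ∈ s := by
    rintro t ⟨h1, h2⟩; exact ⟨by linarith, by linarith⟩
  have mapsB : ∀ t ∈ Set.Icc (0 : ℝ) h, x - t ∈ s := by
    rintro t ⟨h1, h2⟩; exact ⟨by linarith, by linarith⟩
  have h1 : ∀ k : ℕ, k + 1 ≤ n + 1 → ∀ y ∈ s,
      HasDerivWithinAt (iteratedDerivWithin k g s)
        (iteratedDerivWithin (k + 1) g s y) s y := by
    intro k hk y hy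
    have hd : DifferentiableOn ℝ (iteratedDerivWithin k g s) s :=
      hg.differentiableOn_iteratedDerivWithin (by exact_mod_cast Nat.lt_of_succ_le hk) hus
    have := (hd y hy).hasDerivWithinAt
    rwa [← iteratedDerivWithin_succ] at this
  have key : ∀ k : ℕ, k ≤ n + 1 → ∀ t ∈ Set.Icc (0 : ℝ) h,
      iteratedDerivWithin k ph (Set.Icc (0 : ℝ) h) t
        = iteratedDerivWithin k g s (x + t) - (-1 : ℝ) ^ k * iteratedDerivWithin k g s (x - t) := by
    intro k
    induction k with
    | zero => intro _ t ht; simp [hph]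
    | succ k IH =>
      intro hk t ht
      have hk' : k ≤ n + 1 := Nat.le_of_succ_le hk
      rw [iteratedDerivWithin_succ,
        derivWithin_congr (fun z hz => IH hk' z hz) (IH hk' t ht)]
      have ha : HasDerivWithinAt (fun t : ℝ => x + t) 1 (Set.Icc (0 : ℝ) h) t :=
        (hasDerivWithinAt_id t _).const_add x
      have hb : HasDerivWithinAt (fun t : ℝ => x - t) (-1) (Set.Icc (0 : ℝ) h) t :=
        (hasDerivWithinAt_id t _).const_sub x
      have hA : HasDerivWithinAt (fun u : ℝ => iteratedDerivWithin k g s (x + u))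
          (iteratedDerivWithin (k + 1) g s (x + t) * 1) (Set.Icc (0 : ℝ) h) t :=
        (h1 k hk (x + t) (mapsA t ht)).comp t ha mapsA
      have hB : HasDerivWithinAt (fun u : ℝ => iteratedDerivWithin k g s (x - u))
          (iteratedDerivWithin (k + 1) g s (x - t) * (-1)) (Set.Icc (0 : ℝ) h) t :=
        (h1 k hk (x - t) (mapsB t ht)).comp t hb mapsB
      have := (hA.sub (hB.const_mul ((-1 : ℝ) ^ k))).derivWithin (huI.uniqueDiffWithinAt ht)
      refine this.trans ?_
      ring
  have hphs : ContDiffOn ℝ (n + 1) ph (Set.Icc (0 : ℝ) h) := by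
    have c1 : ContDiffOn ℝ (n + 1) (fun t : ℝ => g (x + t)) (Set.Icc (0 : ℝ) h) :=
      hg.comp ((contDiff_const.add contDiff_id).contDiffOn) mapsA
    have c2 : ContDiffOn ℝ (n + 1) (fun t : ℝ => g (x - t)) (Set.Icc (0 : ℝ) h) :=
      hg.comp ((contDiff_const.sub contDiff_id).contDiffOn) mapsB
    exact c1.sub c2
  have hb : ∀ y ∈ Set.Icc (0 : ℝ) h,
      ‖iteratedDerivWithin (n + 1) ph (Set.Icc (0 : ℝ) h) y‖ ≤ 2 * C := by
    intro y hy
    rw [Real.norm_eq_abs, key (n + 1) le_rfl y hy]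
    have b1 := hC (x + y) (mapsA y hy)
    have b2 := hC (x - y) (mapsB y hy)
    calc |iteratedDerivWithin (n+1) g s (x+y) - (-1:ℝ)^(n+1) * iteratedDerivWithin (n+1) g s (x-y)|
        ≤ |iteratedDerivWithin (n+1) g s (x+y)| + |(-1:ℝ)^(n+1) * iteratedDerivWithin (n+1) g s (x-y)| :=
          abs_sub _ _
      _ ≤ C + C := by
          rw [abs_mul, abs_pow, abs_neg, abs_one, one_pow, one_mul]
          exact add_le_add b1 b2
      _ = 2 * C := by ring
  have main := taylor_mean_remainder_bound (le_of_lt hh) hphs (Set.right_mem_Icc.mpr hh.le) hb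
  rw [taylor_within_apply] at main
  have hsum : ∑ k ∈ Finset.range (n + 1), (((k ! : ℝ)⁻¹ * (h - 0) ^ k) •
        iteratedDerivWithin k ph (Set.Icc (0 : ℝ) h) 0)
      = ∑ k ∈ Finset.range (n + 1), ((k ! : ℝ)⁻¹ * h ^ k * (1 - (-1 : ℝ) ^ k)) *
        iteratedDerivWithin k g s x := by
    refine Finset.sum_congr rfl fun k hk => ?_
    have hk' : k ≤ n + 1 := by
      have := Finset.mem_range.mp hk; omega
    rw [key k hk' 0 (Set.left_mem_Icc.mpr hh.le)]
    simp only [smul_eq_mul, sub_zero, add_zero]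
    ring
  rw [hsum] at main
  have hphh : ph h = g (x + h) - g (x - h) := rfl
  rw [hphh, sub_zero] at main
  simpa [Real.norm_eq_abs] using main


/-- Lemma 3, second expansion: three-point fourth-order compact approximation of `f'`. -/
theorem compact_first_derivative (f : ℝ → ℝ) (x h K : ℝ) (hh : 0 < h)
    (hf : ContDiffOn ℝ 5 f (Set.Icc (x - h) (x + h)))
    (hK : ∀ y ∈ Set.Icc (x - h) (x + h), ∀ k : ℕ, k ≤ 5 →
      |iteratedDerivWithin k f (Set.Icc (x - h) (x + h)) y| ≤ K) :
    |iteratedDerivWithin 1 f (Set.Icc (x - h) (x + h)) x -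
        ((f (x + h) - f (x - h)) / (2 * h) -
          h ^ 2 / 6 *
            ((iteratedDerivWithin 2 f (Set.Icc (x - h) (x + h)) (x + h) -
                iteratedDerivWithin 2 f (Set.Icc (x - h) (x + h)) (x - h)) /
              (2 * h)))| ≤ K * h ^ 4 := by
  set s : Set ℝ := Set.Icc (x - h) (x + h) with hsdef
  have hxh : x - h ≤ x + h := by linarith
  have hus : UniqueDiffOn ℝ s := uniqueDiffOn_Icc (by linarith)
  have hxmem : x ∈ s := ⟨by linarith, by linarith⟩
  have hK0 : 0 ≤ K := le_trans (abs_nonneg _) (hK x hxmem 0 (by norm_num))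
  have hf5 : ContDiffOn ℝ ((5 : ℕ) : ℕ∞) f s := by exact_mod_cast hf
  -- first expansion : f itself, n = 4
  have hf4 : ContDiffOn ℝ ((4 + 1 : ℕ) : ℕ∞) f s := by exact_mod_cast hf
  have hKf : ∀ y ∈ s, |iteratedDerivWithin (4 + 1) f s y| ≤ K := by
    intro y hy; exact hK y hy 5 le_rfl
  have E1 := odd_expand f x h K hh 4 hf4 hKf
  -- second expansion : g₂ = f'', n = 2
  set g₂ : ℝ → ℝ := iteratedDerivWithin 2 f s with hg₂def
  have hg₂ : ContDiffOn ℝ ((2 + 1 : ℕ) : ℕ∞) g₂ s :=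
    contDiffOn_iter hus hf5 (by norm_num)
  have hKg : ∀ y ∈ s, |iteratedDerivWithin (2 + 1) g₂ s y| ≤ K := by
    intro y hy
    rw [hg₂def, iter_iter hus 2 3 y hy]
    exact hK y hy 5 le_rfl
  have E2 := odd_expand g₂ x h K hh 2 hg₂ hKg
  -- simplify the sums
  have d1 : ℝ := 0
  have hsum1 : ∑ k ∈ Finset.range (4 + 1), ((k ! : ℝ)⁻¹ * h ^ k * (1 - (-1 : ℝ) ^ k)) *
        iteratedDerivWithin k f s x
      = 2 * h * iteratedDerivWithin 1 f s x + h ^ 3 / 3 * iteratedDerivWithin 3 f s x := by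
    rw [Finset.sum_range_succ, Finset.sum_range_succ, Finset.sum_range_succ,
      Finset.sum_range_succ, Finset.sum_range_one]
    simp [Nat.factorial]
    norm_num
    ring
  have hsum2 : ∑ k ∈ Finset.range (2 + 1), ((k ! : ℝ)⁻¹ * h ^ k * (1 - (-1 : ℝ) ^ k)) *
        iteratedDerivWithin k g₂ s x
      = 2 * h * iteratedDerivWithin 3 f s x := by
    rw [Finset.sum_range_succ, Finset.sum_range_succ, Finset.sum_range_one]
    rw [hg₂def, iter_iter hus 2 1 x hxmem]
    simp [Nat.factorial]
    exact Or.inl (by ring)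
  rw [hsum1] at E1
  rw [hsum2] at E2
  have hfac4 : ((4 : ℕ)! : ℝ) = 24 := by norm_num [Nat.factorial]
  have hfac2 : ((2 : ℕ)! : ℝ) = 2 := by norm_num [Nat.factorial]
  rw [hfac4] at E1
  rw [hfac2] at E2
  set d1 := iteratedDerivWithin 1 f s x
  set d3 := iteratedDerivWithin 3 f s x
  set e1 := f (x + h) - f (x - h) - (2 * h * d1 + h ^ 3 / 3 * d3) with he1def
  set e2 := g₂ (x + h) - g₂ (x - h) - 2 * h * d3 with he2def
  have h2h : (0 : ℝ) < 2 * h := by linarith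
  have heq : d1 - ((f (x + h) - f (x - h)) / (2 * h) -
      h ^ 2 / 6 * ((g₂ (x + h) - g₂ (x - h)) / (2 * h)))
      = -e1 / (2 * h) + h ^ 2 / 6 * (e2 / (2 * h)) := by
    rw [he1def, he2def]
    field_simp
    ring
  rw [heq]
  have he1 : |e1| ≤ K * h ^ 5 / 12 := by
    calc |e1| ≤ 2 * K * h ^ (4 + 1) / 24 := E1
      _ = K * h ^ 5 / 12 := by ring
  have he2 : |e2| ≤ K * h ^ 3 := by
    calc |e2| ≤ 2 * K * h ^ (2 + 1) / 2 := E2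
      _ = K * h ^ 3 := by ring
  calc |(-e1) / (2 * h) + h ^ 2 / 6 * (e2 / (2 * h))|
      ≤ |(-e1) / (2 * h)| + |h ^ 2 / 6 * (e2 / (2 * h))| := abs_add_le _ _
    _ = |e1| / (2 * h) + h ^ 2 / 6 * (|e2| / (2 * h)) := by
        have r1 : |(-e1) / (2 * h)| = |e1| / (2 * h) := by
          rw [abs_div, abs_neg, abs_of_pos h2h]
        have r2 : |h ^ 2 / 6 * (e2 / (2 * h))| = h ^ 2 / 6 * (|e2| / (2 * h)) := by
          rw [abs_mul, abs_of_nonneg (by positivity : (0 : ℝ) ≤ h ^ 2 / 6),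
            abs_div, abs_of_pos h2h]
        rw [r1, r2]
    _ ≤ (K * h ^ 5 / 12) / (2 * h) + h ^ 2 / 6 * ((K * h ^ 3) / (2 * h)) := by gcongr
    _ = K * h ^ 4 / 24 + K * h ^ 4 / 12 := by field_simp; ring
    _ ≤ K * h ^ 4 := by nlinarith [mul_nonneg hK0 (pow_nonneg hh.le 4)]

end BBMB
end

section
/- Let M be a positive integer, h > 0, and let u, v, S be periodic grid functions satisfying the reduction relation v_i = δ_x² u_i − (h²/12)·δ_x² v_i + S_i for all i. Then (v, u) = −|u|₁² − (h²/12)·‖v‖² + (h⁴/144)·|v|₁² + (h²/12)·(v, S) + (S, u). (Lemma 4, identity (lem4-1).) -/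
open Finset

namespace BBMB

lemma sum_shift (M : ℕ) (hM : 0 < M) (f : ℤ → ℝ) (hf : ∀ i, f (i + (M : ℤ)) = f i) :
    ∑ i ∈ Icc (1 : ℤ) (M : ℤ), f (i + 1) = ∑ i ∈ Icc (1 : ℤ) (M : ℤ), f i := by
  have hM1 : (1 : ℤ) ≤ (M : ℤ) := by exact_mod_cast hM
  have h1 : ∑ i ∈ Icc (1 : ℤ) (M : ℤ), f (i + 1)
      = ∑ j ∈ Icc (2 : ℤ) ((M : ℤ) + 1), f j := by
    rw [show (2:ℤ) = 1 + 1 from rfl, ← Finset.map_add_right_Icc, Finset.sum_map]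
    simp [addRightEmbedding]
  have h2 : ∑ j ∈ Icc (2 : ℤ) ((M : ℤ) + 1), f j
      = ∑ j ∈ Icc (2 : ℤ) (M : ℤ), f j + f ((M : ℤ) + 1) := by
    have hs : Icc (2 : ℤ) ((M : ℤ) + 1) = insert ((M : ℤ) + 1) (Icc (2 : ℤ) (M : ℤ)) := by
      ext x; simp [Finset.mem_Icc]; omega
    rw [hs, Finset.sum_insert (by simp)]; ring
  have h4 : ∑ i ∈ Icc (1 : ℤ) (M : ℤ), f i = f 1 + ∑ j ∈ Icc (2 : ℤ) (M : ℤ), f j := by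
    have h3 : Icc (1 : ℤ) (M : ℤ) = insert 1 (Icc (2 : ℤ) (M : ℤ)) := by
      ext x; simp [Finset.mem_Icc]; omega
    rw [h3, Finset.sum_insert (by simp)]
  have h5 : f ((M : ℤ) + 1) = f 1 := by rw [add_comm]; exact hf 1
  rw [h1, h2, h4, h5]; ring

lemma ip_dxx (M : ℕ) (h : ℝ) (w u : ℤ → ℝ) (hM : 0 < M) (hh : 0 < h)
    (hu : Periodic M u) (hw : Periodic M w) :
    ip M h (dxx h u) w = -dip M h u w := by
  have hne : h ≠ 0 := ne_of_gt hh
  have key : ∀ i : ℤ, dxx h u i * w i =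
      (dxm h u (i + 1) * w ((i+1) - 1) - dxm h u i * w (i - 1)) / h
        - (dxm h u i * dxm h w i) := by
    intro i
    simp only [dxx, dxm, add_sub_cancel_right]
    field_simp
    ring
  have hper : ∀ i : ℤ, (fun j => dxm h u j * w (j - 1)) (i + (M : ℤ))
      = (fun j => dxm h u j * w (j - 1)) i := by
    intro i
    simp only [dxm]
    rw [hu i, show i + (M : ℤ) - 1 = (i - 1) + (M : ℤ) by ring, hu (i-1), hw (i-1)]
  have hshift := sum_shift M hM (fun j => dxm h u j * w (j - 1)) hper
  simp only [ip, dip]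
  calc h * ∑ i ∈ Icc (1:ℤ) (M:ℤ), dxx h u i * w i
      = h * ∑ i ∈ Icc (1:ℤ) (M:ℤ),
        ((dxm h u (i+1) * w ((i+1)-1) - dxm h u i * w (i-1)) / h - dxm h u i * dxm h w i) := by
        rw [Finset.sum_congr rfl (fun i _ => key i)]
    _ = h * ((∑ i ∈ Icc (1:ℤ) (M:ℤ), dxm h u (i+1) * w ((i+1)-1)
          - ∑ i ∈ Icc (1:ℤ) (M:ℤ), dxm h u i * w (i-1)) / h
          - ∑ i ∈ Icc (1:ℤ) (M:ℤ), dxm h u i * dxm h w i) := by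
        rw [Finset.sum_sub_distrib, ← Finset.sum_div, Finset.sum_sub_distrib]
    _ = -(h * ∑ i ∈ Icc (1:ℤ) (M:ℤ), dxm h u i * dxm h w i) := by
        rw [show (∑ i ∈ Icc (1:ℤ) (M:ℤ), dxm h u (i+1) * w ((i+1)-1)) =
          ∑ i ∈ Icc (1:ℤ) (M:ℤ), dxm h u i * w (i-1) from hshift]
        ring

/-- Lemma 4, identity (lem4-1). -/
theorem reduction_inner_identity (M : ℕ) (h : ℝ) (u v S : ℤ → ℝ)
    (hM : 0 < M) (hh : 0 < h)
    (hu : Periodic M u) (hv : Periodic M v) (hS : Periodic M S)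
    (hrel : ∀ i : ℤ, v i = dxx h u i - h ^ 2 / 12 * dxx h v i + S i) :
    ip M h v u =
      -(snorm M h u) ^ 2 - h ^ 2 / 12 * (nrm M h v) ^ 2 + h ^ 4 / 144 * (snorm M h v) ^ 2
        + h ^ 2 / 12 * ip M h v S + ip M h S u := by
  have hsq_u : (snorm M h u) ^ 2 = dip M h u u := by
    refine Real.sq_sqrt ?_
    exact mul_nonneg hh.le (Finset.sum_nonneg fun i _ => mul_self_nonneg _)
  have hsq_v : (snorm M h v) ^ 2 = dip M h v v := by
    refine Real.sq_sqrt ?_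
    exact mul_nonneg hh.le (Finset.sum_nonneg fun i _ => mul_self_nonneg _)
  have hnr_v : (nrm M h v) ^ 2 = ip M h v v := by
    refine Real.sq_sqrt ?_
    exact mul_nonneg hh.le (Finset.sum_nonneg fun i _ => mul_self_nonneg _)
  have e1 : ip M h v u = ip M h (dxx h u) u - h ^ 2 / 12 * ip M h (dxx h v) u
      + ip M h S u := by
    simp only [ip]
    rw [Finset.sum_congr rfl (fun i (_ : i ∈ Icc (1:ℤ) (M:ℤ)) => by
      rw [hrel i]; ring :
      ∀ i ∈ Icc (1:ℤ) (M:ℤ), v i * u i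
        = dxx h u i * u i - h ^ 2 / 12 * (dxx h v i * u i) + S i * u i)]
    rw [Finset.sum_add_distrib, Finset.sum_sub_distrib, ← Finset.mul_sum]
    ring
  have e5 : ip M h (dxx h u) v = ip M h v v + h ^ 2 / 12 * ip M h (dxx h v) v
      - ip M h v S := by
    simp only [ip]
    rw [Finset.sum_congr rfl (fun i (_ : i ∈ Icc (1:ℤ) (M:ℤ)) => by
      have h0 : dxx h u i = v i + h ^ 2 / 12 * dxx h v i - S i := by
        have := hrel i; linarith
      rw [h0]; ring :
      ∀ i ∈ Icc (1:ℤ) (M:ℤ), dxx h u i * v i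
        = v i * v i + h ^ 2 / 12 * (dxx h v i * v i) - v i * S i)]
    rw [Finset.sum_sub_distrib, Finset.sum_add_distrib, ← Finset.mul_sum]
    ring
  have e2 : ip M h (dxx h u) u = -dip M h u u := ip_dxx M h u u hM hh hu hu
  have e3 : ip M h (dxx h v) u = -dip M h v u := ip_dxx M h u v hM hh hv hu
  have e4 : ip M h (dxx h u) v = -dip M h u v := ip_dxx M h v u hM hh hu hv
  have e6 : ip M h (dxx h v) v = -dip M h v v := ip_dxx M h v v hM hh hv hv
  have dsym : dip M h v u = dip M h u v := by
    simp only [dip]; congr 1; exact Finset.sum_congr rfl fun i _ => mul_comm _ _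
  have e4' : dip M h u v = -(ip M h (dxx h u) v) := by linarith
  rw [hsq_u, hsq_v, hnr_v, e1, e2, e3, dsym, e4', e5, e6]
  ring


end BBMB
end

section
/- Let M be a positive integer, h > 0, and let u, v, S be periodic grid functions satisfying the reduction relation v_i = δ_x² u_i − (h²/12)·δ_x² v_i + S_i for all i. Then (Δ_x v, u) = (h²/12)·(Δ_x v, S) + (Δ_x S, u). (Lemma 4, identity (lem4-3).) -/
open Finset

namespace BBMB

lemma sum_shift_one (M : ℕ) (hM : 0 < M) (F : ℤ → ℝ) (hF : Periodic M F) :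
    ∑ i ∈ Finset.Icc (1 : ℤ) (M : ℤ), F (i + 1) = ∑ i ∈ Finset.Icc (1 : ℤ) (M : ℤ), F i := by
  have hM1 : (1 : ℤ) ≤ (M : ℤ) := by exact_mod_cast hM
  have h1 : ∑ i ∈ Finset.Icc (1 : ℤ) (M : ℤ), F (i + 1)
      = ∑ i ∈ Finset.Icc (2 : ℤ) ((M : ℤ) + 1), F i := by
    rw [show Finset.Icc (2 : ℤ) ((M : ℤ) + 1) = (Finset.Icc (1 : ℤ) (M : ℤ)).map
      (addRightEmbedding 1) from by rw [Finset.map_add_right_Icc]; norm_num, Finset.sum_map]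
    rfl
  rw [h1]
  have h2 : Finset.Icc (1 : ℤ) ((M : ℤ) + 1) = insert 1 (Finset.Icc (2 : ℤ) ((M : ℤ) + 1)) := by
    ext x; simp; omega
  have h3 : Finset.Icc (1 : ℤ) ((M : ℤ) + 1) = insert ((M : ℤ) + 1) (Finset.Icc (1 : ℤ) (M : ℤ)) := by
    ext x; simp; omega
  have e2 : ∑ i ∈ Finset.Icc (1 : ℤ) ((M:ℤ)+1), F i
      = F 1 + ∑ i ∈ Finset.Icc (2 : ℤ) ((M : ℤ) + 1), F i := by
    rw [h2, Finset.sum_insert (by simp)]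
  have e3 : ∑ i ∈ Finset.Icc (1 : ℤ) ((M:ℤ)+1), F i
      = F ((M:ℤ)+1) + ∑ i ∈ Finset.Icc (1 : ℤ) (M : ℤ), F i := by
    rw [h3, Finset.sum_insert (by simp)]
  have hper : F ((M:ℤ)+1) = F 1 := by
    have := hF 1; rw [← this]; ring_nf
  linarith [e2, e3]

lemma per_shift (M : ℕ) (F : ℤ → ℝ) (hF : Periodic M F) (a : ℤ) :
    Periodic M (fun i => F (i + a)) := by
  intro i
  have := hF (i + a)
  simpa [show i + (M:ℤ) + a = i + a + (M:ℤ) from by ring] using this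

lemma sum_shift_s10 (M : ℕ) (hM : 0 < M) (F : ℤ → ℝ) (hF : Periodic M F) (k : ℤ) :
    ∑ i ∈ Finset.Icc (1 : ℤ) (M : ℤ), F (i + k) = ∑ i ∈ Finset.Icc (1 : ℤ) (M : ℤ), F i := by
  induction k using Int.induction_on with
  | zero => simp
  | succ k ih =>
      have h := sum_shift_one M hM (fun i => F (i + k)) (per_shift M F hF k)
      calc ∑ i ∈ Finset.Icc (1 : ℤ) (M : ℤ), F (i + (k + 1))
          = ∑ i ∈ Finset.Icc (1 : ℤ) (M : ℤ), F (i + 1 + k) := by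
            apply Finset.sum_congr rfl; intro i _
            have : i + ((k : ℤ) + 1) = i + 1 + k := by ring
            rw [this]
        _ = ∑ i ∈ Finset.Icc (1 : ℤ) (M : ℤ), F (i + k) := h
        _ = _ := ih
  | pred k ih =>
      have h := sum_shift_one M hM (fun i => F (i + (-(k:ℤ) - 1))) (per_shift M F hF _)
      have h' : ∑ i ∈ Finset.Icc (1 : ℤ) (M : ℤ), F (i + -(k:ℤ))
          = ∑ i ∈ Finset.Icc (1 : ℤ) (M : ℤ), F (i + (-(k:ℤ) - 1)) := by
        rw [← h]; apply Finset.sum_congr rfl; intro i _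
        have : i + 1 + (-(k:ℤ) - 1) = i + -(k:ℤ) := by ring
        rw [this]
      calc ∑ i ∈ Finset.Icc (1 : ℤ) (M : ℤ), F (i + (-(k:ℤ) - 1))
          = ∑ i ∈ Finset.Icc (1 : ℤ) (M : ℤ), F (i + -(k:ℤ)) := h'.symm
        _ = _ := ih

/-- canonical shifted-product sums -/
lemma sum_prod_shift (M : ℕ) (hM : 0 < M) (f g : ℤ → ℝ)
    (hf : Periodic M f) (hg : Periodic M g) (a b k : ℤ) :
    ∑ i ∈ Finset.Icc (1 : ℤ) (M : ℤ), f (i + a) * g (i + b)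
    = ∑ i ∈ Finset.Icc (1 : ℤ) (M : ℤ), f (i + a + k) * g (i + b + k) := by
  have hF : Periodic M (fun i => f (i + a) * g (i + b)) := by
    intro i
    have h1 := hf (i + a); have h2 := hg (i + b)
    simp only
    rw [show i + (M:ℤ) + a = i + a + (M:ℤ) from by ring,
        show i + (M:ℤ) + b = i + b + (M:ℤ) from by ring, h1, h2]
  have := sum_shift_s10 M hM (fun i => f (i + a) * g (i + b)) hF k
  rw [← this]
  apply Finset.sum_congr rfl; intro i _
  rw [show i + a + k = i + k + a from by ring, show i + b + k = i + k + b from by ring]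

/-- canonicalization: `∑ f(i+a) g(i+b) = ∑ f(i+c) g(i)` when `c = a - b`. -/
lemma sps (M : ℕ) (hM : 0 < M) (f g : ℤ → ℝ)
    (hf : Periodic M f) (hg : Periodic M g) (a b c : ℤ) (hc : a - b = c) :
    ∑ i ∈ Finset.Icc (1 : ℤ) (M : ℤ), f (i + a) * g (i + b)
    = ∑ i ∈ Finset.Icc (1 : ℤ) (M : ℤ), f (i + c) * g i := by
  rw [sum_prod_shift M hM f g hf hg a b (-b)]
  apply Finset.sum_congr rfl; intro i _
  rw [show i + a + -b = i + c from by rw [← hc]; ring, show i + b + -b = i from by ring]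

/-- swap: `∑ f(i+k) g(i) = ∑ g(i+(-k)) f(i)`. -/
lemma Tswap (M : ℕ) (hM : 0 < M) (f g : ℤ → ℝ)
    (hf : Periodic M f) (hg : Periodic M g) (k : ℤ) :
    ∑ i ∈ Finset.Icc (1 : ℤ) (M : ℤ), f (i + k) * g i
    = ∑ i ∈ Finset.Icc (1 : ℤ) (M : ℤ), g (i + -k) * f i := by
  have h1 : ∑ i ∈ Finset.Icc (1 : ℤ) (M : ℤ), f (i + k) * g i
      = ∑ i ∈ Finset.Icc (1 : ℤ) (M : ℤ), g (i + 0) * f (i + k) := by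
    apply Finset.sum_congr rfl; intro i _
    rw [show i + (0:ℤ) = i from by ring]; ring
  rw [h1, sps M hM g f hg hf 0 k (-k) (by ring)]

section steps
variable (M : ℕ) (h : ℝ) (u v : ℤ → ℝ)

/-- skew symmetry of `Dx ∘ dxx`. -/
lemma step2 (hM : 0 < M) (hh : 0 < h) (hu : Periodic M u) :
    ∑ i ∈ Finset.Icc (1 : ℤ) (M : ℤ), Dx h (dxx h u) i * u i = 0 := by
  have hne : h ≠ 0 := ne_of_gt hh
  have expand : ∀ i : ℤ, Dx h (dxx h u) i * u i
      = (1 / (2 * h ^ 3)) * (u (i + 2) * u i - 2 * (u (i + 1) * u i)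
          + 2 * (u (i + (-1)) * u i) - u (i + (-2)) * u i) := by
    intro i
    simp only [Dx, dxx]
    rw [show i + 1 + 1 = i + 2 from by ring, show i + 1 - 1 = i from by ring,
        show i - 1 + 1 = i from by ring, show i - 1 - 1 = i + (-2) from by ring,
        show i - 1 = i + (-1) from by ring]
    field_simp; ring
  rw [Finset.sum_congr rfl (fun i _ => expand i)]
  simp only [← Finset.mul_sum, Finset.sum_sub_distrib, Finset.sum_add_distrib]
  have e2 := Tswap M hM u u hu hu 2
  have e1 := Tswap M hM u u hu hu 1
  norm_num at e1 e2 ⊢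
  rw [e1, e2]
  exact Or.inr (by ring)

lemma step3 (hM : 0 < M) (hh : 0 < h) (hu : Periodic M u) (hv : Periodic M v) :
    ∑ i ∈ Finset.Icc (1 : ℤ) (M : ℤ), Dx h (dxx h v) i * u i
    = ∑ i ∈ Finset.Icc (1 : ℤ) (M : ℤ), Dx h v i * dxx h u i := by
  have hne : h ≠ 0 := ne_of_gt hh
  have expL : ∀ i : ℤ, Dx h (dxx h v) i * u i
      = (1 / (2 * h ^ 3)) * (v (i + 2) * u i - 2 * (v (i + 1) * u i)
          + 2 * (v (i + (-1)) * u i) - v (i + (-2)) * u i) := by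
    intro i
    simp only [Dx, dxx]
    rw [show i + 1 + 1 = i + 2 from by ring, show i + 1 - 1 = i from by ring,
        show i - 1 + 1 = i from by ring, show i - 1 - 1 = i + (-2) from by ring,
        show i - 1 = i + (-1) from by ring]
    field_simp; ring
  have expR : ∀ i : ℤ, Dx h v i * dxx h u i
      = (1 / (2 * h ^ 3)) * (v (i + 1) * u (i + 1) - 2 * (v (i + 1) * u i)
          + v (i + 1) * u (i + (-1)) - v (i + (-1)) * u (i + 1)
          + 2 * (v (i + (-1)) * u i) - v (i + (-1)) * u (i + (-1))) := by
    intro i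
    simp only [Dx, dxx]
    rw [show i - 1 = i + (-1) from by ring]
    field_simp; ring
  rw [Finset.sum_congr rfl (fun i _ => expL i), Finset.sum_congr rfl (fun i _ => expR i)]
  simp only [← Finset.mul_sum, Finset.sum_sub_distrib, Finset.sum_add_distrib]
  have B1 := sps M hM v u hv hu 1 1 0 (by ring)
  have B2 := sps M hM v u hv hu 1 (-1) 2 (by ring)
  have B3 := sps M hM v u hv hu (-1) 1 (-2) (by ring)
  have B4 := sps M hM v u hv hu (-1) (-1) 0 (by ring)
  norm_num at B1 B2 B3 B4 ⊢
  rw [B1, B2, B3, B4]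
  exact Or.inl (by ring)

lemma step5a (hM : 0 < M) (hh : 0 < h) (hv : Periodic M v) :
    ∑ i ∈ Finset.Icc (1 : ℤ) (M : ℤ), Dx h v i * v i = 0 := by
  have hne : h ≠ 0 := ne_of_gt hh
  have expand : ∀ i : ℤ, Dx h v i * v i
      = (1 / (2 * h)) * (v (i + 1) * v i - v (i + (-1)) * v i) := by
    intro i
    simp only [Dx]
    rw [show i - 1 = i + (-1) from by ring]
    field_simp
  rw [Finset.sum_congr rfl (fun i _ => expand i)]
  simp only [← Finset.mul_sum, Finset.sum_sub_distrib]
  have e1 := Tswap M hM v v hv hv 1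
  norm_num at e1 ⊢
  rw [e1]
  exact Or.inr (by ring)

lemma step5b (hM : 0 < M) (hh : 0 < h) (hv : Periodic M v) :
    ∑ i ∈ Finset.Icc (1 : ℤ) (M : ℤ), Dx h v i * dxx h v i = 0 := by
  have hne : h ≠ 0 := ne_of_gt hh
  have expand : ∀ i : ℤ, Dx h v i * dxx h v i
      = (1 / (2 * h ^ 3)) * (v (i + 1) * v (i + 1) - 2 * (v (i + 1) * v i)
          + v (i + 1) * v (i + (-1)) - v (i + (-1)) * v (i + 1)
          + 2 * (v (i + (-1)) * v i) - v (i + (-1)) * v (i + (-1))) := by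
    intro i
    simp only [Dx, dxx]
    rw [show i - 1 = i + (-1) from by ring]
    field_simp; ring
  rw [Finset.sum_congr rfl (fun i _ => expand i)]
  simp only [← Finset.mul_sum, Finset.sum_sub_distrib, Finset.sum_add_distrib]
  have B1 := sps M hM v v hv hv 1 1 0 (by ring)
  have B2 := sps M hM v v hv hv 1 (-1) 2 (by ring)
  have B3 := sps M hM v v hv hv (-1) 1 (-2) (by ring)
  have B4 := sps M hM v v hv hv (-1) (-1) 0 (by ring)
  have e1 := Tswap M hM v v hv hv 1
  have e2 := Tswap M hM v v hv hv 2
  norm_num at B1 B2 B3 B4 e1 e2 ⊢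
  rw [B1, B2, B3, B4, e1, e2]
  exact Or.inr (by ring)
end steps


/-- Lemma 4, identity (lem4-3). -/
theorem reduction_Dx_identity (M : ℕ) (h : ℝ) (u v S : ℤ → ℝ)
    (hM : 0 < M) (hh : 0 < h)
    (hu : Periodic M u) (hv : Periodic M v) (hS : Periodic M S)
    (hrel : ∀ i : ℤ, v i = dxx h u i - h ^ 2 / 12 * dxx h v i + S i) :
    ip M h (Dx h v) u = h ^ 2 / 12 * ip M h (Dx h v) S + ip M h (Dx h S) u := by
  have hne : h ≠ 0 := ne_of_gt hh
  set c : ℝ := h ^ 2 / 12 with hc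
  have e1 : ∑ i ∈ Finset.Icc (1 : ℤ) (M : ℤ), Dx h v i * u i
      = ∑ i ∈ Finset.Icc (1 : ℤ) (M : ℤ), Dx h (dxx h u) i * u i
        - c * ∑ i ∈ Finset.Icc (1 : ℤ) (M : ℤ), Dx h (dxx h v) i * u i
        + ∑ i ∈ Finset.Icc (1 : ℤ) (M : ℤ), Dx h S i * u i := by
    have pt : ∀ i : ℤ, Dx h v i * u i
        = Dx h (dxx h u) i * u i - c * (Dx h (dxx h v) i * u i) + Dx h S i * u i := by
      intro i
      simp only [Dx]
      rw [hrel (i + 1), hrel (i - 1)]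
      ring
    rw [Finset.sum_congr rfl (fun i _ => pt i)]
    simp only [Finset.sum_add_distrib, Finset.sum_sub_distrib, ← Finset.mul_sum]
  have e4 : ∑ i ∈ Finset.Icc (1 : ℤ) (M : ℤ), Dx h v i * dxx h u i
      = ∑ i ∈ Finset.Icc (1 : ℤ) (M : ℤ), Dx h v i * v i
        + c * ∑ i ∈ Finset.Icc (1 : ℤ) (M : ℤ), Dx h v i * dxx h v i
        - ∑ i ∈ Finset.Icc (1 : ℤ) (M : ℤ), Dx h v i * S i := by
    have pt : ∀ i : ℤ, Dx h v i * dxx h u i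
        = Dx h v i * v i + c * (Dx h v i * dxx h v i) - Dx h v i * S i := by
      intro i
      linear_combination (-(Dx h v i)) * (hrel i)
    rw [Finset.sum_congr rfl (fun i _ => pt i)]
    simp only [Finset.sum_add_distrib, Finset.sum_sub_distrib, ← Finset.mul_sum]
  have key : ∑ i ∈ Finset.Icc (1 : ℤ) (M : ℤ), Dx h v i * u i
      = c * ∑ i ∈ Finset.Icc (1 : ℤ) (M : ℤ), Dx h v i * S i
        + ∑ i ∈ Finset.Icc (1 : ℤ) (M : ℤ), Dx h S i * u i := by
    rw [e1, step2 M h u hM hh hu, step3 M h u v hM hh hu hv, e4,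
        step5a M h v hM hh hv, step5b M h v hM hh hv]
    ring
  simp only [ip]
  rw [key]
  ring
end BBMB
end
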